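/- arXiv:1908.00663 — 2 statements merged into one kernel-verified Lean document; each statement's English description precedes it below -/
import Mathlib

section
/- (Proposition 4, First Stage Equivalence with Multiple Networks.) Let q ≥ 1, let M¹, …, M^q be n×n real matrices, η₀¹, …, η₀^q, X ∈ ℝⁿ and β ∈ ℝ. Assume I − Σ_{j=1}^q M^j ∘ η₀^j is invertible and X_k ≠ 0 whenever η₀^j_k ≠ 0 for some j. Let f := (I − Σ_{j=1}^q M^j ∘ η₀^j)⁻¹ (β·X) and define η̃^j ∈ ℝⁿ by η̃^j_k := η₀^j_k · f_k / X_k if η₀^j_k ≠ 0 and η̃^j_k := 0 otherwise. Then f = β·X + Σ_{j=1}^q (M^j ∘ X)·η̃^j, and for each j the support of η̃^j is contained in the support of η₀^j. -/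
/-- For an n×n real matrix `M` and a vector `v`, `M ∘ v` is the matrix `M * diagonal v`. -/
noncomputable def circ {n : ℕ} (M : Matrix (Fin n) (Fin n) ℝ) (v : Fin n → ℝ) :
    Matrix (Fin n) (Fin n) ℝ :=
  M * Matrix.diagonal v

/-- (Proposition 4, First Stage Equivalence with Multiple Networks.)  Let `q ≥ 1`, let
`M¹, …, M^q` be n×n real matrices, `η₀¹, …, η₀^q, X ∈ ℝⁿ`, `β ∈ ℝ`.  Assume
`I − Σ_j M^j ∘ η₀^j` is invertible and `X_k ≠ 0` whenever `η₀^j_k ≠ 0` for some `j`.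
Let `f := (I − Σ_j M^j ∘ η₀^j)⁻¹ (β·X)` and define `ηtil^j_k := η₀^j_k · f_k / X_k` if
`η₀^j_k ≠ 0`, `ηtil^j_k := 0` otherwise.  Then `f = β·X + Σ_j (M^j ∘ X)·ηtil^j`, and for
each `j` the support of `ηtil^j` is contained in the support of `η₀^j`. -/
theorem first_stage_equivalence_multiple_networks {n q : ℕ} (hq : 1 ≤ q)
    (M : Fin q → Matrix (Fin n) (Fin n) ℝ)
    (η₀ : Fin q → Fin n → ℝ) (X : Fin n → ℝ) (β : ℝ)
    (hinv : IsUnit (1 - ∑ j, circ (M j) (η₀ j)))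
    (hX : ∀ k, (∃ j, η₀ j k ≠ 0) → X k ≠ 0)
    (f : Fin n → ℝ) (hf : f = (1 - ∑ j, circ (M j) (η₀ j))⁻¹.mulVec (β • X))
    (ηtil : Fin q → Fin n → ℝ)
    (hηtil : ∀ j k, ηtil j k = if η₀ j k ≠ 0 then η₀ j k * f k / X k else 0) :
    (f = β • X + ∑ j, (circ (M j) X).mulVec (ηtil j)) ∧
      ∀ j k, η₀ j k = 0 → ηtil j k = 0 := by

  have hsupp : ∀ j k, η₀ j k = 0 → ηtil j k = 0 := by
    intro j k h
    rw [hηtil]; simp [h]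
  refine ⟨?_, hsupp⟩
  set A := ∑ j, circ (M j) (η₀ j) with hA
  have hfe : (1 - A).mulVec f = β • X := by
    rw [hf, Matrix.mulVec_mulVec, Matrix.mul_nonsing_inv _
      ((Matrix.isUnit_iff_isUnit_det _).mp hinv), Matrix.one_mulVec]
  have key : ∀ j, (circ (M j) (η₀ j)).mulVec f = (circ (M j) X).mulVec (ηtil j) := by
    intro j
    unfold circ
    rw [← Matrix.mulVec_mulVec, ← Matrix.mulVec_mulVec]
    have hd : (Matrix.diagonal (η₀ j)).mulVec f = (Matrix.diagonal X).mulVec (ηtil j) := by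
      funext k
      rw [Matrix.mulVec_diagonal, Matrix.mulVec_diagonal, hηtil]
      by_cases h : η₀ j k = 0
      · simp [h]
      · have hXk : X k ≠ 0 := hX k ⟨j, h⟩
        rw [if_pos h]
        field_simp [h]
    rw [hd]
  have : A.mulVec f = ∑ j, (circ (M j) X).mulVec (ηtil j) := by
    have hsum : (∑ j, circ (M j) (η₀ j)).mulVec f
        = ∑ j, (circ (M j) (η₀ j)).mulVec f := by
      funext i
      simp only [Matrix.mulVec, dotProduct, Matrix.sum_apply, Finset.sum_apply,
        Finset.sum_mul]
      rw [Finset.sum_comm]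
    rw [hA, hsum]
    exact Finset.sum_congr rfl fun j _ => key j
  have hsub : f - A.mulVec f = β • X := by
    rw [← hfe, Matrix.sub_mulVec, Matrix.one_mulVec]
  rw [← this]
  rw [← hsub]; abel
end

section
/- (Oracle inequality for the LASSO under the compatibility condition.) Let A be an n×p real matrix, η₀ ∈ ℝ^p with support S of cardinality s₀ ≥ 1, ε ∈ ℝⁿ, and Y := Aη₀ + ε. Suppose the compatibility condition holds with constant φ₀ > 0: for every δ ∈ ℝ^p with ‖δ_{S^c}‖₁ ≤ 3‖δ_S‖₁ one has ‖δ_S‖₁² ≤ s₀ · (δᵀ(AᵀA)δ / n) / φ₀². Let η̂ be a global minimizer of η ↦ (1/n)‖Y − Aη‖₂² + λ‖η‖₁, and suppose λ ≥ 4‖(1/n)Aᵀε‖_∞. Then (1/n)‖A(η̂ − η₀)‖₂² + λ‖η̂ − η₀‖₁ ≤ 4λ²s₀/φ₀². -/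
open Matrix

/-- The (normalized) LASSO objective with design matrix `A`, response `Y` and tuning
parameter `λ`: `η ↦ (1/n)‖Y − Aη‖₂² + λ‖η‖₁`. -/
noncomputable def lassoObjN {n p : ℕ} (A : Matrix (Fin n) (Fin p) ℝ) (Y : Fin n → ℝ)
    (lam : ℝ) (η : Fin p → ℝ) : ℝ :=
  (1 / (n : ℝ)) * (∑ i, (Y i - A.mulVec η i) ^ 2) + lam * ∑ j, |η j|

set_option maxHeartbeats 1600000

/-- (Oracle inequality for the LASSO under the compatibility condition.)  Let `Y := Aη₀ + ε`
with `η₀` supported on `S` of cardinality `s₀ ≥ 1`.  Suppose the compatibility condition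
holds with constant `φ₀ > 0`: for every `δ` with `‖δ_{S^c}‖₁ ≤ 3‖δ_S‖₁` one has
`‖δ_S‖₁² ≤ s₀ · (δᵀ(AᵀA)δ / n) / φ₀²`.  Let `η̂` be a global minimizer of
`η ↦ (1/n)‖Y − Aη‖₂² + λ‖η‖₁`, and suppose `λ ≥ 4‖(1/n)Aᵀε‖_∞`.  Then
`(1/n)‖A(η̂ − η₀)‖₂² + λ‖η̂ − η₀‖₁ ≤ 4λ²s₀/φ₀²`. -/
theorem lasso_oracle_inequality {n p : ℕ} (A : Matrix (Fin n) (Fin p) ℝ)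
    (η₀ : Fin p → ℝ) (ε : Fin n → ℝ) (Y : Fin n → ℝ) (hY : Y = A.mulVec η₀ + ε)
    (S : Finset (Fin p)) (hS : ∀ j, j ∈ S ↔ η₀ j ≠ 0) (hcard : 1 ≤ S.card)
    (φ₀ : ℝ) (hφ₀ : 0 < φ₀)
    (hcompat : ∀ δ : Fin p → ℝ,
      (∑ j ∈ Sᶜ, |δ j|) ≤ 3 * ∑ j ∈ S, |δ j| →
        (∑ j ∈ S, |δ j|) ^ 2 ≤ (S.card : ℝ) * (δ ⬝ᵥ (Aᵀ * A).mulVec δ / n) / φ₀ ^ 2)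
    (lam : ℝ) (ηhat : Fin p → ℝ)
    (hmin : ∀ η : Fin p → ℝ, lassoObjN A Y lam ηhat ≤ lassoObjN A Y lam η)
    (hlam : 4 * (⨆ j, |(1 / (n : ℝ)) * Aᵀ.mulVec ε j|) ≤ lam) :
    (1 / (n : ℝ)) * (∑ i, (A.mulVec (ηhat - η₀) i) ^ 2) + lam * ∑ j, |ηhat j - η₀ j|
      ≤ 4 * lam ^ 2 * S.card / φ₀ ^ 2 := by
  classical
  set δ : Fin p → ℝ := ηhat - η₀ with hδ
  have hδj : ∀ j, δ j = ηhat j - η₀ j := fun j => rfl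
  set Q : ℝ := (1 / (n : ℝ)) * ∑ i, (A.mulVec δ i) ^ 2 with hQdef
  set T : ℝ := ∑ j ∈ S, |δ j| with hTdef
  set U : ℝ := ∑ j ∈ Sᶜ, |δ j| with hUdef
  have hQ0 : 0 ≤ Q := by
    apply mul_nonneg (by positivity)
    exact Finset.sum_nonneg fun i _ => sq_nonneg _
  have hT0 : 0 ≤ T := Finset.sum_nonneg fun j _ => abs_nonneg _
  have hU0 : 0 ≤ U := Finset.sum_nonneg fun j _ => abs_nonneg _
  -- λ ≥ 0
  have hM0 : 0 ≤ ⨆ j, |(1 / (n : ℝ)) * Aᵀ.mulVec ε j| :=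
    Real.iSup_nonneg fun j => abs_nonneg _
  have hlam0 : 0 ≤ lam := by linarith
  -- residual identity
  have hres : ∀ i, Y i - A.mulVec ηhat i = ε i - A.mulVec δ i := by
    intro i
    rw [hδ, Matrix.mulVec_sub, hY]
    simp only [Pi.add_apply, Pi.sub_apply]
    ring
  have hε : ∑ i, (Y i - A.mulVec η₀ i) ^ 2 = ∑ i, (ε i) ^ 2 := by
    apply Finset.sum_congr rfl
    intro i _
    rw [hY]
    simp
  -- expand the square
  have h1 : ∑ i, (Y i - A.mulVec ηhat i) ^ 2
      = ∑ i, (ε i) ^ 2 - 2 * ∑ i, ε i * A.mulVec δ i + ∑ i, (A.mulVec δ i) ^ 2 := by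
    rw [Finset.mul_sum, ← Finset.sum_sub_distrib, ← Finset.sum_add_distrib]
    apply Finset.sum_congr rfl
    intro i _
    rw [hres i]
    ring
  -- empirical process bound
  have hEeq : (1 / (n : ℝ)) * ∑ i, ε i * A.mulVec δ i
      = ∑ j, ((1 / (n : ℝ)) * Aᵀ.mulVec ε j) * δ j := by
    rw [Finset.mul_sum]
    simp only [mulVec, dotProduct, transpose_apply, Finset.mul_sum, Finset.sum_mul]
    rw [Finset.sum_comm]
    exact Finset.sum_congr rfl fun j _ => Finset.sum_congr rfl fun i _ => by ring
  have hMle : ∀ j, |(1 / (n : ℝ)) * Aᵀ.mulVec ε j|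
      ≤ ⨆ j, |(1 / (n : ℝ)) * Aᵀ.mulVec ε j| := fun j =>
    le_ciSup (f := fun j => |(1 / (n : ℝ)) * Aᵀ.mulVec ε j|)
      (Set.Finite.bddAbove (Set.finite_range _)) j
  have hE : (1 / (n : ℝ)) * ∑ i, ε i * A.mulVec δ i ≤ (lam / 4) * ∑ j, |δ j| := by
    rw [hEeq]
    calc ∑ j, ((1 / (n : ℝ)) * Aᵀ.mulVec ε j) * δ j
        ≤ ∑ j, |(1 / (n : ℝ)) * Aᵀ.mulVec ε j| * |δ j| := by
          apply Finset.sum_le_sum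
          intro j _
          rw [← abs_mul]
          exact le_abs_self _
      _ ≤ ∑ j, (lam / 4) * |δ j| := by
          apply Finset.sum_le_sum
          intro j _
          apply mul_le_mul_of_nonneg_right _ (abs_nonneg _)
          have := hMle j
          linarith
      _ = (lam / 4) * ∑ j, |δ j| := by rw [Finset.mul_sum]
  -- ℓ¹ decompositions
  have hsplit : ∀ x : Fin p → ℝ, ∑ j, |x j| = ∑ j ∈ S, |x j| + ∑ j ∈ Sᶜ, |x j| :=
    fun x => (Finset.sum_add_sum_compl S _).symm
  have hη₀c : ∑ j ∈ Sᶜ, |η₀ j| = 0 := by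
    apply Finset.sum_eq_zero
    intro j hj
    rw [Finset.mem_compl] at hj
    rw [abs_eq_zero]
    by_contra h
    exact hj ((hS j).mpr h)
  have hηhatc : ∑ j ∈ Sᶜ, |ηhat j| = U := by
    rw [hUdef]
    apply Finset.sum_congr rfl
    intro j hj
    rw [Finset.mem_compl] at hj
    have h0 : η₀ j = 0 := by
      by_contra h
      exact hj ((hS j).mpr h)
    rw [hδj j, h0, sub_zero]
  have htri : ∑ j ∈ S, |η₀ j| ≤ (∑ j ∈ S, |ηhat j|) + T := by
    rw [hTdef, ← Finset.sum_add_distrib]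
    apply Finset.sum_le_sum
    intro j _
    rw [hδj j]
    calc |η₀ j| = |ηhat j - (ηhat j - η₀ j)| := by ring_nf
      _ ≤ |ηhat j| + |ηhat j - η₀ j| := abs_sub _ _
  -- basic inequality
  have hδsplit : ∑ j, |δ j| = T + U := hsplit δ
  have hbasic := hmin η₀
  simp only [lassoObjN] at hbasic
  rw [h1, hε] at hbasic
  have hstar : Q + (lam / 2) * U ≤ (3 * lam / 2) * T := by
    have e1 : lam * ∑ j, |ηhat j| = lam * ∑ j ∈ S, |ηhat j| + lam * U := by
      rw [hsplit ηhat, hηhatc]; ring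
    have e2 : lam * ∑ j, |η₀ j| = lam * ∑ j ∈ S, |η₀ j| := by
      rw [hsplit η₀, hη₀c]; ring
    have e3 : lam * ∑ j ∈ S, |η₀ j| ≤ lam * ∑ j ∈ S, |ηhat j| + lam * T := by
      have := mul_le_mul_of_nonneg_left htri hlam0
      linarith [this]
    have hE' : (1 / (n : ℝ)) * ∑ i, ε i * A.mulVec δ i ≤ (lam / 4) * (T + U) := by
      rw [← hδsplit]; exact hE
    nlinarith [hbasic, hE', e3]
  -- main case split
  have hsumeq : ∑ j, |ηhat j - η₀ j| = T + U := by
    have : ∑ j, |ηhat j - η₀ j| = ∑ j, |δ j| :=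
      Finset.sum_congr rfl fun j _ => by rw [hδj]
    rw [this, hδsplit]
  rcases eq_or_lt_of_le hlam0 with heq | hlampos
  · -- λ = 0
    have hQle : Q ≤ 0 := by
      rw [← heq] at hstar
      linarith
    have hz : 4 * lam ^ 2 * (S.card : ℝ) / φ₀ ^ 2 = 0 := by
      rw [← heq]; norm_num
    rw [hsumeq, hz, ← heq]
    nlinarith [hQle]
  · -- λ > 0
    have hcone : U ≤ 3 * T := by nlinarith [hstar, hQ0, hlampos]
    have hc := hcompat δ (by rw [← hTdef, ← hUdef]; exact hcone)
    rw [← hTdef] at hc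
    have hquad : δ ⬝ᵥ (Aᵀ * A).mulVec δ = ∑ i, (A.mulVec δ i) ^ 2 := by
      rw [← mulVec_mulVec, dotProduct_mulVec, vecMul_transpose]
      simp [dotProduct, sq]
    rw [hquad] at hc
    have hQQ : (∑ i, (A.mulVec δ i) ^ 2) / (n : ℝ) = Q := by
      rw [hQdef]; ring
    rw [hQQ] at hc
    have hφ2 : (0:ℝ) < φ₀ ^ 2 := by positivity
    have hc' : T ^ 2 * φ₀ ^ 2 ≤ (S.card : ℝ) * Q := (le_div_iff₀ hφ2).mp hc
    have hs₀1 : (1:ℝ) ≤ (S.card : ℝ) := by exact_mod_cast hcard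
    have hs₀pos : (0:ℝ) < (S.card : ℝ) := by linarith
    rw [hsumeq, le_div_iff₀ hφ2]
    -- goal : (Q + lam * (T + U)) * φ₀ ^ 2 ≤ 4 * lam ^ 2 * S.card
    have h6 : (Q + lam * (T + U)) * φ₀ ^ 2 ≤ (4 * lam * T - Q) * φ₀ ^ 2 := by
      apply mul_le_mul_of_nonneg_right _ (le_of_lt hφ2)
      linarith
    have h7 : (S.card : ℝ) * ((4 * lam * T - Q) * φ₀ ^ 2)
        ≤ (S.card : ℝ) * (4 * lam ^ 2 * (S.card : ℝ)) := by
      nlinarith [mul_le_mul_of_nonneg_right hc' (le_of_lt hφ2),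
        sq_nonneg (φ₀ ^ 2 * T - 2 * lam * (S.card : ℝ))]
    have h8 : (4 * lam * T - Q) * φ₀ ^ 2 ≤ 4 * lam ^ 2 * (S.card : ℝ) :=
      (mul_le_mul_iff_right₀ hs₀pos).mp h7
    linarith
end
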